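/- Let G = (V,E) be a finite undirected graph, ≺ a linear order on V, and G' = (V,A) the acyclic orientation of G with (u,v) ∈ A iff {u,v} ∈ E and u ≺ v. The map sending a labeling lab : A → {⊕,⊖} to the orientation O of E where each ⊕-labeled arc keeps its orientation and each ⊖-labeled arc is reversed, is a bijection between the valid labelings of G' and the acyclic orientations of G. -/

import Mathlib

namespace UD

variable {V : Type*}

/-- Source of arc `a` in the multidigraph where `⊖`-arcs (label `false`) are reversed. -/
def src (lab : V × V → Bool) (a : V × V) : V := if lab a then a.1 else a.2

/-- Destination of arc `a` in the multidigraph where `⊖`-arcs are reversed. -/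
def dst (lab : V × V → Bool) (a : V × V) : V := if lab a then a.2 else a.1

/-- `l` is a (nonempty) walk from `x` to `y` in the multidigraph obtained from the
arcs `A` by reversing the orientation of the arcs labeled `⊖` (`false`). -/
def IsRevWalk (A : Finset (V × V)) (lab : V × V → Bool) (l : List (V × V)) (x y : V) : Prop :=
  l ≠ [] ∧ (∀ a ∈ l, a ∈ A) ∧ l.Chain' (fun a b => dst lab a = src lab b) ∧
    l.head?.map (src lab) = some x ∧ l.getLast?.map (dst lab) = some y

/-- `l` uses at least one `⊖`-labeled arc. -/
def Negative (lab : V × V → Bool) (l : List (V × V)) : Prop := ∃ a ∈ l, lab a = false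

/-- A labeling is valid iff no closed walk of the reversed multidigraph uses a `⊖` arc. -/
def Valid (A : Finset (V × V)) (lab : V × V → Bool) : Prop :=
  ∀ l : List (V × V), (∃ x, IsRevWalk A lab l x x) → ¬ Negative lab l

/-- Plain directed walk in the digraph with arc set `A`. -/
def IsWalk (A : Finset (V × V)) (l : List (V × V)) (x y : V) : Prop :=
  l ≠ [] ∧ (∀ a ∈ l, a ∈ A) ∧ l.Chain' (fun a b => a.2 = b.1) ∧
    l.head?.map Prod.fst = some x ∧ l.getLast?.map Prod.snd = some y

def Acyclic (A : Finset (V × V)) : Prop := ∀ l x, ¬ IsWalk A l x x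

def IsFAS [DecidableEq V] (A F : Finset (V × V)) : Prop := F ⊆ A ∧ Acyclic (A \ F)

def IsMinFAS [DecidableEq V] (A F : Finset (V × V)) : Prop :=
  IsFAS A F ∧ ∀ F' : Finset (V × V), F' ⊂ F → ¬ IsFAS A F'

/-- Extend a labeling of the arcs of `A` to all of `V × V` (by `⊕` outside `A`). -/
def ext [DecidableEq V] (A : Finset (V × V)) (lab : A → Bool) : V × V → Bool :=
  fun a => if h : a ∈ A then lab ⟨a, h⟩ else true

def ValidOn [DecidableEq V] (A : Finset (V × V)) (lab : A → Bool) : Prop := Valid A (ext A lab)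

/-- Number of valid labelings (update digraphs) of the digraph with arc set `A`. -/
noncomputable def numUD [DecidableEq V] (A : Finset (V × V)) : ℕ := Nat.card {lab : A → Bool // ValidOn A lab}

inductive PClass
  | pos | neg | none
  deriving DecidableEq

/-- Connectivity class of the ordered pair `(x, y)` in the reversed multidigraph. -/
def HasClass (A : Finset (V × V)) (lab : V × V → Bool) (x y : V) : PClass → Prop
  | .pos => (∃ l, IsRevWalk A lab l x y) ∧ ∀ l, IsRevWalk A lab l x y → ¬ Negative lab l
  | .neg => ∃ l, IsRevWalk A lab l x y ∧ Negative lab l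
  | .none => ¬ ∃ l, IsRevWalk A lab l x y

/-- Number of valid labelings in the class `(s, t)` of the oss-graph `(A, α, β)`. -/
noncomputable def classCount [DecidableEq V] (A : Finset (V × V)) (α β : V) (s t : PClass) : ℕ :=
  Nat.card {lab : A → Bool //
    ValidOn A lab ∧ HasClass A (ext A lab) α β s ∧ HasClass A (ext A lab) β α t}

/-- Index of the part of the ordered partition `B` containing `v`. -/
def partIdx [DecidableEq V] (B : List (Finset V)) (v : V) : ℕ :=
  B.findIdx (fun P => decide (v ∈ P))

/-- `B` is an ordered partition of `V` (a block-sequential update schedule). -/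
def IsOrdPartition [DecidableEq V] (B : List (Finset V)) : Prop :=
  (∀ P ∈ B, P.Nonempty) ∧ B.Pairwise Disjoint ∧ ∀ v : V, ∃ P ∈ B, v ∈ P

/-- The labeling induced by a schedule: `⊕` (true) iff `i`'s part is not strictly before `j`'s. -/
def labSched [DecidableEq V] (B : List (Finset V)) : V × V → Bool :=
  fun a => decide (partIdx B a.2 ≤ partIdx B a.1)


private lemma chain'_imp_mem {α : Type*} {R S : α → α → Prop} :
    ∀ {l : List α}, l.Chain' R → (∀ a ∈ l, ∀ b ∈ l, R a b → S a b) → l.Chain' S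
  | [], _, _ => List.IsChain.nil
  | [_], _, _ => by simp [List.Chain']
  | a :: b :: t, h, hf => by
    simp only [List.Chain', List.isChain_cons_cons] at h ⊢
    refine ⟨hf a (by simp) b (by simp) h.1, chain'_imp_mem h.2 ?_⟩
    intro x hx y hy
    exact hf x (List.mem_cons_of_mem a hx) y (List.mem_cons_of_mem a hy)

/-- Transfer a rev-walk to a plain walk via an arcwise map `φ`. -/
private lemma transfer {A O : Finset (V × V)} {lab : V × V → Bool} (φ : V × V → V × V)
    {l : List (V × V)} {x y : V}
    (hl : ∀ a ∈ l, φ a ∈ O ∧ (φ a).1 = src lab a ∧ (φ a).2 = dst lab a)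
    (h : IsRevWalk A lab l x y) : IsWalk O (l.map φ) x y := by
  obtain ⟨hne, _, hch, hh, hlast⟩ := h
  refine ⟨by simpa using hne, ?_, ?_, ?_, ?_⟩
  · intro b hb
    obtain ⟨a, ha, rfl⟩ := List.mem_map.1 hb
    exact (hl a ha).1
  · rw [List.Chain', List.isChain_map]
    refine chain'_imp_mem hch ?_
    intro a ha b hb hr
    rw [(hl a ha).2.2, (hl b hb).2.1, hr]
  · cases l with
    | nil => exact absurd rfl hne
    | cons a t =>
      simp only [List.map_cons, List.head?_cons, Option.map_some] at hh ⊢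
      rw [(hl a (by simp)).2.1, hh]
  · cases hl' : l.getLast? with
    | none => rw [hl'] at hlast; simp at hlast
    | some a =>
      have ha : a ∈ l := by
        obtain ⟨h', heq⟩ := List.mem_getLast?_eq_getLast (l := l) (x := a)
          (by simp [Option.mem_def, hl'])
        exact heq ▸ List.getLast_mem h'
      rw [hl'] at hlast
      rw [List.getLast?_map, hl']
      simp only [Option.map_some] at hlast ⊢
      rw [(hl a ha).2.2, ← hlast]

/-- Transfer a plain walk to a rev-walk via an arcwise map `ψ`. -/
private lemma transfer' {A O : Finset (V × V)} {lab : V × V → Bool} (ψ : V × V → V × V)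
    {l : List (V × V)} {x y : V}
    (hl : ∀ b ∈ l, ψ b ∈ A ∧ src lab (ψ b) = b.1 ∧ dst lab (ψ b) = b.2)
    (h : IsWalk O l x y) : IsRevWalk A lab (l.map ψ) x y := by
  obtain ⟨hne, _, hch, hh, hlast⟩ := h
  refine ⟨by simpa using hne, ?_, ?_, ?_, ?_⟩
  · intro b hb
    obtain ⟨a, ha, rfl⟩ := List.mem_map.1 hb
    exact (hl a ha).1
  · rw [List.Chain', List.isChain_map]
    refine chain'_imp_mem hch ?_
    intro a ha b hb hr
    rw [(hl a ha).2.2, (hl b hb).2.1, hr]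
  · cases l with
    | nil => exact absurd rfl hne
    | cons a t =>
      simp only [List.map_cons, List.head?_cons, Option.map_some] at hh ⊢
      rw [(hl a (by simp)).2.1, hh]
  · cases hl' : l.getLast? with
    | none => rw [hl'] at hlast; simp at hlast
    | some a =>
      have ha : a ∈ l := by
        obtain ⟨h', heq⟩ := List.mem_getLast?_eq_getLast (l := l) (x := a)
          (by simp [Option.mem_def, hl'])
        exact heq ▸ List.getLast_mem h'
      rw [hl'] at hlast
      rw [List.getLast?_map, hl']
      simp only [Option.map_some] at hlast ⊢
      rw [(hl a ha).2.2, ← hlast]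

private lemma walk_lt {V : Type*} [Preorder V] {A : Finset (V × V)}
    (hA : ∀ a ∈ A, a.1 < a.2) :
    ∀ (l : List (V × V)) (x y : V), IsWalk A l x y → x < y := by
  intro l
  induction l with
  | nil => intro x y h; exact absurd rfl h.1
  | cons a t ih =>
    intro x y h
    obtain ⟨-, hmem, hch, hh, hlast⟩ := h
    simp only [List.head?_cons, Option.map_some, Option.some.injEq] at hh
    cases t with
    | nil =>
      simp only [List.getLast?_singleton, Option.map_some, Option.some.injEq] at hlast
      rw [← hh, ← hlast]
      exact hA a (hmem a (by simp))
    | cons b t' =>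
      simp only [List.Chain', List.isChain_cons_cons] at hch
      have hw : IsWalk A (b :: t') a.2 y := by
        refine ⟨by simp, fun c hc => hmem c (List.mem_cons_of_mem a hc), hch.2, ?_, ?_⟩
        · simp [hch.1]
        · rw [← hlast, List.getLast?_cons_cons]
      calc x = a.1 := hh.symm
        _ < a.2 := hA a (hmem a (by simp))
        _ < y := ih a.2 y hw

private lemma ord_acyclic {V : Type*} [Preorder V] {A : Finset (V × V)}
    (hA : ∀ a ∈ A, a.1 < a.2) : Acyclic A :=
  fun l x h => lt_irrefl x (walk_lt hA l x x h)

/-- For the acyclic orientation `G'` of a graph `G` by a linear order, reversing the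
`⊖`-arcs is a bijection between the valid labelings of `G'` and the acyclic orientations
of `G`. -/
theorem statement9 {V : Type*} [LinearOrder V] [DecidableEq V] (A : Finset (V × V))
    (hA : ∀ a ∈ A, a.1 < a.2) :
    Set.BijOn
      (fun lab : V × V → Bool =>
        A.filter (fun a => lab a = true) ∪ (A.filter (fun a => lab a = false)).image Prod.swap)
      {lab | Valid A lab ∧ ∀ a ∉ A, lab a = false}
      {O : Finset (V × V) |
        (∀ a ∈ A, (a ∈ O ∧ a.swap ∉ O) ∨ (a.swap ∈ O ∧ a ∉ O)) ∧
        (∀ b ∈ O, b ∈ A ∨ b.swap ∈ A) ∧ Acyclic O} := by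
  classical
  have hswap : ∀ a ∈ A, a.swap ∉ A := by
    intro a ha hs
    have h2 := hA a.swap hs
    simp only [Prod.fst_swap, Prod.snd_swap] at h2
    exact absurd h2 (not_lt.2 (hA a ha).le)
  have memO : ∀ (lab : V × V → Bool) (b : V × V),
      (b ∈ A.filter (fun a => lab a = true) ∪
        (A.filter (fun a => lab a = false)).image Prod.swap) ↔
      (b ∈ A ∧ lab b = true) ∨ (b.swap ∈ A ∧ lab b.swap = false) := by
    intro lab b
    simp only [Finset.mem_union, Finset.mem_filter, Finset.mem_image]
    constructor
    · rintro (h | ⟨a, ⟨ha, hla⟩, rfl⟩)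
      · exact Or.inl h
      · right; simpa using ⟨ha, hla⟩
    · rintro (h | ⟨hs, hl⟩)
      · exact Or.inl h
      · exact Or.inr ⟨b.swap, ⟨hs, hl⟩, Prod.swap_swap b⟩
  refine ⟨?_, ?_, ?_⟩
  · -- MapsTo
    rintro lab ⟨hval, hout⟩
    refine ⟨?_, ?_, ?_⟩
    · intro a ha
      by_cases h : lab a = true
      · left
        refine ⟨(memO lab a).2 (Or.inl ⟨ha, h⟩), ?_⟩
        intro hm
        rcases (memO lab a.swap).1 hm with ⟨h1, _⟩ | ⟨h1, h2⟩
        · exact hswap a ha h1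
        · rw [Prod.swap_swap, h] at h2; simp at h2
      · have hf : lab a = false := by simpa using h
        right
        refine ⟨(memO lab a.swap).2 (Or.inr (by simpa using ⟨ha, hf⟩)), ?_⟩
        intro hm
        rcases (memO lab a).1 hm with ⟨_, h2⟩ | ⟨h1, _⟩
        · rw [hf] at h2; simp at h2
        · exact hswap a ha h1
    · intro b hb
      rcases (memO lab b).1 hb with ⟨h, _⟩ | ⟨h, _⟩
      exacts [Or.inl h, Or.inr h]
    · -- Acyclic
      intro l x hw
      set ψ : V × V → V × V := fun b => if b ∈ A then b else b.swap with hψ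
      have hlcond : ∀ b ∈ l, ψ b ∈ A ∧ src lab (ψ b) = b.1 ∧ dst lab (ψ b) = b.2 := by
        intro b hb
        have hbO := hw.2.1 b hb
        rcases (memO lab b).1 hbO with ⟨hb1, hb2⟩ | ⟨hb1, hb2⟩
        · have hpb : ψ b = b := if_pos hb1
          rw [hpb]
          exact ⟨hb1, by simp [src, hb2], by simp [dst, hb2]⟩
        · have hbA : b ∉ A := fun hb' => hswap b hb' hb1
          have hpb : ψ b = b.swap := if_neg hbA
          rw [hpb]
          exact ⟨hb1, by simp [src, hb2], by simp [dst, hb2]⟩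
      have hrev := transfer' (A := A) (lab := lab) ψ hlcond hw
      by_cases hneg : Negative lab (l.map ψ)
      · exact hval (l.map ψ) ⟨x, hrev⟩ hneg
      · have hpos : ∀ a ∈ l.map ψ, lab a = true := by
          intro a ha
          by_contra h
          exact hneg ⟨a, ha, by simpa using h⟩
        have hplain := transfer (O := A) id (l := l.map ψ) (x := x) (y := x) ?_ hrev
        · rw [List.map_id] at hplain
          exact ord_acyclic hA _ x hplain
        · intro a ha
          exact ⟨hrev.2.1 a ha, by simp [src, hpos a ha], by simp [dst, hpos a ha]⟩
  · -- InjOn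
    intro l1 h1 l2 h2 heq
    funext a
    by_cases ha : a ∈ A
    · have mem_iff : ∀ lab : V × V → Bool,
          (a ∈ A.filter (fun c => lab c = true) ∪
            (A.filter (fun c => lab c = false)).image Prod.swap) ↔ lab a = true := by
        intro lab
        rw [memO]
        constructor
        · rintro (⟨_, h⟩ | ⟨h, _⟩)
          · exact h
          · exact absurd h (hswap a ha)
        · intro h; exact Or.inl ⟨ha, h⟩
      have heq' : (A.filter (fun c => l1 c = true) ∪
            (A.filter (fun c => l1 c = false)).image Prod.swap) =
          (A.filter (fun c => l2 c = true) ∪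
            (A.filter (fun c => l2 c = false)).image Prod.swap) := heq
      have hiff : l1 a = true ↔ l2 a = true := by
        rw [← mem_iff l1, ← mem_iff l2, heq']
      cases h1a : l1 a <;> cases h2a : l2 a <;> simp_all
    · rw [h1.2 a ha, h2.2 a ha]
  · -- SurjOn
    rintro O ⟨h1, h2, h3⟩
    set lab : V × V → Bool := fun a => decide (a ∈ A ∧ a ∈ O) with hlabdef
    have labA : ∀ a, a ∈ A → (lab a = true ↔ a ∈ O) := by
      intro a ha; simp [hlabdef, ha]
    have labN : ∀ a, a ∉ A → lab a = false := by
      intro a ha; simp [hlabdef, ha]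
    refine ⟨lab, ⟨?_, labN⟩, ?_⟩
    · -- Valid
      rintro l ⟨x, hw⟩ hneg
      set φ : V × V → V × V := fun a => if lab a then a else a.swap with hφ
      have hcond : ∀ a ∈ l, φ a ∈ O ∧ (φ a).1 = src lab a ∧ (φ a).2 = dst lab a := by
        intro a ha
        have haA : a ∈ A := hw.2.1 a ha
        by_cases h : lab a = true
        · have hpa : φ a = a := if_pos h
          rw [hpa]
          exact ⟨(labA a haA).1 h, by simp [src, h], by simp [dst, h]⟩
        · have hf : lab a = false := by simpa using h
          have hno : a ∉ O := fun hin => h ((labA a haA).2 hin)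
          have hpa : φ a = a.swap := if_neg (by simp [hf])
          rw [hpa]
          refine ⟨?_, by simp [src, hf], by simp [dst, hf]⟩
          rcases h1 a haA with ⟨hin, _⟩ | ⟨hin, _⟩
          · exact absurd hin hno
          · exact hin
      exact h3 (l.map φ) x (transfer φ hcond hw)
    · -- image equality
      show A.filter (fun a => lab a = true) ∪
        (A.filter (fun a => lab a = false)).image Prod.swap = O
      ext b
      rw [memO]
      constructor
      · rintro (⟨hbA, hbl⟩ | ⟨hsA, hsl⟩)
        · exact (labA b hbA).1 hbl
        · have hno : b.swap ∉ O := by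
            intro hin
            have := (labA b.swap hsA).2 hin
            rw [hsl] at this; simp at this
          rcases h1 b.swap hsA with ⟨hin, _⟩ | ⟨hin, _⟩
          · exact absurd hin hno
          · rwa [Prod.swap_swap] at hin
      · intro hb
        rcases h2 b hb with hbA | hsA
        · exact Or.inl ⟨hbA, (labA b hbA).2 hb⟩
        · right
          refine ⟨hsA, ?_⟩
          have hno : b.swap ∉ O := by
            rcases h1 b.swap hsA with ⟨hin, hno⟩ | ⟨hin, hno⟩
            · rw [Prod.swap_swap] at hno; exact absurd hb hno
            · exact hno
          simp [hlabdef, hno]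

end UD
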